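/- Let K = 2q+1, t = 2r with q ≥ t+1, r ≥ 1. Define α_k = 2(k-1) for k in [1, r] and α_k = t for k in [r+1, t+1], and for q1 in [q+1, K-t-1], define F(q1) = Σ_{k=1}^{t+1} α_k * C(q1, k-1) * C(K-q1, t-k+1). Then F(q1) < F(q1+1) for all q1 in [q+1, K-t-2]; in particular q1 = q+1 minimizes F(q1) over [q+1, K-t-1]. -/

import Mathlib

open Finset

lemma tailA (n m : ℕ) : ∀ (d t i : ℕ), i + d = t → 1 ≤ i →
    ∑ j ∈ Icc i t, Nat.choose (n+1) j * Nat.choose m (t - j)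
      = (∑ j ∈ Icc i t, Nat.choose n j * Nat.choose (m+1) (t - j))
        + Nat.choose n (i-1) * Nat.choose m (t - i) := by
  intro d
  induction d with
  | zero =>
    intro t i hit hi
    obtain rfl : i = t := by omega
    obtain ⟨s, rfl⟩ : ∃ s, i = s + 1 := ⟨i - 1, by omega⟩
    simp [Nat.choose_succ_succ']
    omega
  | succ d ih =>
    intro t i hit hi
    have hlt : i < t := by omega
    rw [Icc_eq_cons_Ioc (le_of_lt hlt), sum_cons, sum_cons, ← Finset.Icc_add_one_left_eq_Ioc,
      ih t (i+1) (by omega) (by omega)]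
    obtain ⟨s, rfl⟩ : ∃ s, i = s + 1 := ⟨i - 1, by omega⟩
    have h1 : t - (s+1) = (t - (s+1+1)) + 1 := by omega
    rw [h1, Nat.choose_succ_succ' m (t - (s+1+1)), Nat.choose_succ_succ' n s]
    simp only [Nat.add_sub_cancel]
    ring

lemma weight_expand (r t : ℕ) (x : ℕ → ℕ) (ht : t = 2 * r) :
    ∑ j ∈ range (t+1), (if j + 1 ≤ r then 2*j else 2*r) * x j
      = ∑ i ∈ Icc 1 r, (2 * ∑ j ∈ Icc i t, x j) := by
  have h1 : ∀ j, (if j + 1 ≤ r then 2*j else 2*r) = ∑ i ∈ Icc 1 r, (if i ≤ j then 2 else 0) := by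
    intro j
    rw [← sum_filter]
    have hf : (Icc 1 r).filter (fun i => i ≤ j) = Icc 1 (min r j) := by
      ext y; simp; omega
    rw [hf, sum_const, Nat.card_Icc, smul_eq_mul]
    split_ifs <;> omega
  calc ∑ j ∈ range (t+1), (if j + 1 ≤ r then 2*j else 2*r) * x j
      = ∑ j ∈ range (t+1), ∑ i ∈ Icc 1 r, (if i ≤ j then 2 * x j else 0) := by
        refine sum_congr rfl fun j _ => ?_
        rw [h1 j, sum_mul]
        refine sum_congr rfl fun i _ => ?_
        split_ifs <;> simp
    _ = ∑ i ∈ Icc 1 r, ∑ j ∈ range (t+1), (if i ≤ j then 2 * x j else 0) := sum_comm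
    _ = ∑ i ∈ Icc 1 r, (2 * ∑ j ∈ Icc i t, x j) := by
        refine sum_congr rfl fun i hi => ?_
        rw [← sum_filter]
        have hf : (range (t+1)).filter (fun j => i ≤ j) = Icc i t := by
          ext y; simp; omega
        rw [hf, mul_sum]

lemma key (n m r t : ℕ) (ht : t = 2 * r) (hr : 1 ≤ r) (hn : r ≤ n + 1) (hm : t ≤ m + 1) :
    ∑ j ∈ range (t+1), (if j + 1 ≤ r then 2*j else 2*r) *
        (Nat.choose n j * Nat.choose (m+1) (t - j))
      < ∑ j ∈ range (t+1), (if j + 1 ≤ r then 2*j else 2*r) *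
        (Nat.choose (n+1) j * Nat.choose m (t - j)) := by
  rw [weight_expand r t _ ht, weight_expand r t _ ht]
  have hrw : ∀ i ∈ Icc 1 r,
      2 * (∑ j ∈ Icc i t, Nat.choose (n+1) j * Nat.choose m (t - j))
        = 2 * (∑ j ∈ Icc i t, Nat.choose n j * Nat.choose (m+1) (t - j))
          + 2 * (Nat.choose n (i-1) * Nat.choose m (t - i)) := by
    intro i hi
    simp only [mem_Icc] at hi
    rw [tailA n m (t - i) t i (by omega) (by omega)]
    ring
  rw [sum_congr rfl hrw, sum_add_distrib]
  refine Nat.lt_add_of_pos_right ?_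
  refine sum_pos (fun i hi => ?_) ⟨1, by simp [hr]⟩
  simp only [mem_Icc] at hi
  have h1 : 0 < Nat.choose n (i - 1) := Nat.choose_pos (by omega)
  have h2 : 0 < Nat.choose m (t - i) := Nat.choose_pos (by omega)
  positivity

theorem stmt_17 (q r t K : ℕ) (hr : 1 ≤ r) (ht : t = 2 * r) (hK : K = 2 * q + 1)
    (hq : t + 1 ≤ q)
    (α : ℕ → ℕ) (hα : ∀ k, α k = if k ≤ r then 2 * (k - 1) else t)
    (F : ℕ → ℕ)
    (hF : ∀ q1, F q1 = ∑ k ∈ Finset.Icc 1 (t + 1),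
        α k * (Nat.choose q1 (k - 1) * Nat.choose (K - q1) (t + 1 - k))) :
    ∀ q1, q + 1 ≤ q1 → q1 ≤ K - t - 2 → F q1 < F (q1 + 1) := by
  intro q1 h1 h2
  have reindex : ∀ n M : ℕ,
      ∑ k ∈ Icc 1 (t+1), α k * (Nat.choose n (k-1) * Nat.choose M (t+1-k))
        = ∑ j ∈ range (t+1), (if j + 1 ≤ r then 2*j else 2*r) *
            (Nat.choose n j * Nat.choose M (t - j)) := by
    intro n M
    rw [← Finset.Ico_add_one_right_eq_Icc, Finset.sum_Ico_eq_sum_range]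
    refine sum_congr (by norm_num) fun j hj => ?_
    rw [hα]
    have e1 : 1 + j - 1 = j := by omega
    have e2 : t + 1 - (1 + j) = t - j := by omega
    rw [e1, e2]
    have e3 : (if 1 + j ≤ r then 2 * j else t) = (if j + 1 ≤ r then 2*j else 2*r) := by
      rcases le_or_gt (j+1) r with h | h
      · rw [if_pos (by omega), if_pos h]
      · rw [if_neg (by omega), if_neg (by omega)]; omega
    rw [e3]
  have hm1 : K - q1 = (K - q1 - 1) + 1 := by omega
  have hm2 : K - (q1 + 1) = K - q1 - 1 := by omega
  rw [hF, hF, reindex q1 (K - q1), reindex (q1+1) (K - (q1+1)), hm1, hm2]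
  exact key q1 (K - q1 - 1) r t ht hr (by omega) (by omega)
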